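/- arXiv:1407.5715 — 2 statements merged into one kernel-verified Lean document; each statement's English description precedes it below -/
import Mathlib

section
/- Let (M,τ) be a tracial W*-probability space, X = (X₁,…,Xₙ) self-adjoint elements of M, and suppose ξ₁,…,ξₙ ∈ L²(M,τ) satisfy the conjugate relations (τ⊗τ)((∂_j P)(X)) = τ(ξ_j · P(X)) for all P ∈ ℂ⟨Z₁,…,Zₙ⟩ and all j. Then for each j, P ∈ I¹_X implies ∂_j P ∈ I²_X, where I¹_X = {P : P(X)=0} and I²_X = {Q ∈ ℂ⟨Z⟩⊗ℂ⟨Z⟩ : Q(X)=0}; consequently ∂_j descends to a well-defined derivation ℂ⟨Z⟩/I¹_X → (ℂ⟨Z⟩⊗ℂ⟨Z⟩)/I²_X. -/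
/- STATEMENT 4: If (ξ₁,…,ξₙ) satisfies the conjugate relations for (X₁,…,Xₙ) in a tracial
W*-probability space, then for each j, P ∈ I¹_X implies ∂_j P ∈ I²_X, and consequently
∂_j descends to a well-defined (linear) map on the quotients
ℂ⟨Z⟩/I¹_X → (ℂ⟨Z⟩⊗ℂ⟨Z⟩)/I²_X. -/

open scoped TensorProduct InnerProductSpace
noncomputable section

/-- The free noncommutative polynomial algebra ℂ⟨Z₁,…,Zₙ⟩. -/
abbrev FA (n : ℕ) := FreeAlgebra ℂ (Fin n)

/-- `D` is the free difference quotient ∂_j: the derivation into the tensor square with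
`∂_j Z_i = δ_{ij} 1⊗1`. -/
def IsFDQ {n : ℕ} (j : Fin n) (D : FA n →ₗ[ℂ] FA n ⊗[ℂ] FA n) : Prop :=
  (∀ P Q : FA n, D (P * Q) = D P * (1 ⊗ₜ[ℂ] Q) + (P ⊗ₜ[ℂ] 1) * D Q) ∧
  (∀ i : Fin n, D (FreeAlgebra.ι ℂ i) = if i = j then (1 : FA n) ⊗ₜ[ℂ] (1 : FA n) else 0)

variable {H : Type} [NormedAddCommGroup H] [InnerProductSpace ℂ H] [CompleteSpace H]

/-- The vector state `τ(a) = ⟨Ω, aΩ⟩` (the trace, in standard form). -/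
def trVec (Ω : H) : (H →L[ℂ] H) →ₗ[ℂ] ℂ where
  toFun a := ⟪Ω, a Ω⟫_ℂ
  map_add' a b := by simp [inner_add_right]
  map_smul' c a := by simp [inner_smul_right]

/-- `τ ⊗ τ` on the (algebraic) tensor square of B(H). -/
def ttB (Ω : H) : ((H →L[ℂ] H) ⊗[ℂ] (H →L[ℂ] H)) →ₗ[ℂ] ℂ :=
  TensorProduct.lift ((LinearMap.mul ℂ ℂ).compl₁₂ (trVec Ω) (trVec Ω))

/-- The partial trace `τ ⊗ id`. -/
def tid (Ω : H) : ((H →L[ℂ] H) ⊗[ℂ] (H →L[ℂ] H)) →ₗ[ℂ] (H →L[ℂ] H) :=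
  TensorProduct.lift ((LinearMap.lsmul ℂ (H →L[ℂ] H)) ∘ₗ (trVec Ω))

/-- The partial trace `id ⊗ τ`. -/
def idt (Ω : H) : ((H →L[ℂ] H) ⊗[ℂ] (H →L[ℂ] H)) →ₗ[ℂ] (H →L[ℂ] H) :=
  TensorProduct.lift ((LinearMap.lsmul ℂ (H →L[ℂ] H)) ∘ₗ (trVec Ω)).flip

/-- Evaluation `ev_X : ℂ⟨Z₁,…,Zₙ⟩ → B(H)`, `Z_i ↦ X_i`. -/
def ev {n : ℕ} (X : Fin n → (H →L[ℂ] H)) : FA n →ₐ[ℂ] (H →L[ℂ] H) :=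
  FreeAlgebra.lift ℂ X

/-- `ev_X ⊗ ev_X` on the tensor square. -/
def evT {n : ℕ} (X : Fin n → (H →L[ℂ] H)) :
    (FA n ⊗[ℂ] FA n) →ₐ[ℂ] ((H →L[ℂ] H) ⊗[ℂ] (H →L[ℂ] H)) :=
  Algebra.TensorProduct.map (ev X) (ev X)

/-- The von Neumann algebra `vN(X₁,…,Xₙ)` generated by the `X_i`
(double commutant of the self-adjoint family). -/
def vNX {n : ℕ} (X : Fin n → (H →L[ℂ] H)) : Set (H →L[ℂ] H) :=
  Set.centralizer (Set.centralizer (Set.range X))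

/-- Auxiliary: evaluation at elements of `M` lands in `M`. -/
lemma ev_mem_aux {n : ℕ} (M : VonNeumannAlgebra H) (X : Fin n → (H →L[ℂ] H))
    (hXM : ∀ i, X i ∈ M) (P : FA n) : ev X P ∈ M := by
  induction P using FreeAlgebra.induction with
  | grade0 r =>
    rw [show ev X (algebraMap ℂ (FA n) r) = algebraMap ℂ _ r from (ev X).commutes r]
    exact M.toStarSubalgebra.algebraMap_mem r
  | grade1 i =>
    rw [show ev X (FreeAlgebra.ι ℂ i) = X i from FreeAlgebra.lift_ι_apply _ _]
    exact hXM i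
  | mul a b ha hb => rw [map_mul]; exact mul_mem ha hb
  | add a b ha hb => rw [map_add]; exact add_mem ha hb

/-- Auxiliary: the image of evaluation (at self-adjoint elements) is star-closed. -/
lemma ev_star_aux {n : ℕ} (X : Fin n → (H →L[ℂ] H)) (hXsa : ∀ i, IsSelfAdjoint (X i))
    (P : FA n) : ∃ Q : FA n, ev X Q = star (ev X P) := by
  induction P using FreeAlgebra.induction with
  | grade0 r =>
    refine ⟨algebraMap ℂ (FA n) (starRingEnd ℂ r), ?_⟩
    rw [(ev X).commutes, (ev X).commutes]
    simp [Algebra.algebraMap_eq_smul_one, star_smul]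
  | grade1 i =>
    refine ⟨FreeAlgebra.ι ℂ i, ?_⟩
    rw [show ev X (FreeAlgebra.ι ℂ i) = X i from FreeAlgebra.lift_ι_apply _ _]
    exact ((hXsa i).star_eq).symm
  | mul a b ha hb =>
    obtain ⟨Qa, hQa⟩ := ha; obtain ⟨Qb, hQb⟩ := hb
    exact ⟨Qb * Qa, by rw [map_mul, map_mul, hQa, hQb, star_mul]⟩
  | add a b ha hb =>
    obtain ⟨Qa, hQa⟩ := ha; obtain ⟨Qb, hQb⟩ := hb
    exact ⟨Qa + Qb, by rw [map_add, map_add, hQa, hQb, star_add]⟩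

/-- Auxiliary (Step B): if all right `τ(· R(X))`-slices of an evaluated tensor vanish,
then the evaluated tensor vanishes. -/
lemma stepB_aux {n : ℕ} (M : VonNeumannAlgebra H) (Ω : H)
    (hfaith : ∀ a : H →L[ℂ] H, a ∈ M → trVec Ω (star a * a) = 0 → a = 0)
    (X : Fin n → (H →L[ℂ] H)) (hXM : ∀ i, X i ∈ M) (hXsa : ∀ i, IsSelfAdjoint (X i))
    (u : FA n ⊗[ℂ] FA n)
    (hσ : ∀ R : FA n, idt Ω (evT X u * ((1 : (H →L[ℂ] H)) ⊗ₜ[ℂ] ev X R)) = 0) :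
    evT X u = 0 := by
  classical
  have evT_tmul : ∀ p q : FA n, evT X (p ⊗ₜ[ℂ] q) = ev X p ⊗ₜ[ℂ] ev X q := fun p q =>
    Algebra.TensorProduct.map_tmul (ev X) (ev X) p q
  have idt_tmul : ∀ a b : H →L[ℂ] H, idt Ω (a ⊗ₜ[ℂ] b) = trVec Ω b • a := by
    intro a b; simp [idt]
  let b : Module.Basis (Module.Basis.ofVectorSpaceIndex ℂ (H →L[ℂ] H)) ℂ (H →L[ℂ] H) :=
    Module.Basis.ofVectorSpace ℂ (H →L[ℂ] H)
  let E : ((H →L[ℂ] H) ⊗[ℂ] (H →L[ℂ] H)) ≃ₗ[ℂ]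
      (Module.Basis.ofVectorSpaceIndex ℂ (H →L[ℂ] H) →₀ (H →L[ℂ] H)) :=
    TensorProduct.equivFinsuppOfBasisLeft b
  have E_tmul : ∀ (a c : H →L[ℂ] H) (k), E (a ⊗ₜ[ℂ] c) k = (b.repr a k) • c := fun a c k =>
    TensorProduct.equivFinsuppOfBasisLeft_apply_tmul_apply b a c k
  -- components of E (evT v) are in the range of ev
  have hrepr : ∀ (v : FA n ⊗[ℂ] FA n) (k), ∃ P₀ : FA n, ev X P₀ = E (evT X v) k := by
    intro v k
    induction v using TensorProduct.induction_on with
    | zero =>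
      exact ⟨0, by rw [map_zero, map_zero, map_zero, Finsupp.coe_zero, Pi.zero_apply]⟩
    | tmul p q =>
      exact ⟨(b.repr (ev X p) k) • q, by rw [evT_tmul, E_tmul, map_smul]⟩
    | add v w hv hw =>
      obtain ⟨Pv, hPv⟩ := hv; obtain ⟨Pw, hPw⟩ := hw
      exact ⟨Pv + Pw, by rw [map_add, map_add, map_add, Finsupp.add_apply, hPv, hPw]⟩
  -- pairing of the E-components with τ(· R(X)) through right slices
  have hpair2 : ∀ (v : (H →L[ℂ] H) ⊗[ℂ] (H →L[ℂ] H)) (k) (R : FA n),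
      trVec Ω (E v k * ev X R)
        = b.repr (idt Ω (v * ((1 : (H →L[ℂ] H)) ⊗ₜ[ℂ] ev X R))) k := by
    intro v k R
    induction v using TensorProduct.induction_on with
    | zero =>
      rw [map_zero, Finsupp.coe_zero, Pi.zero_apply, zero_mul, map_zero, zero_mul, map_zero,
        map_zero, Finsupp.coe_zero, Pi.zero_apply]
    | tmul a c =>
      rw [E_tmul, Algebra.TensorProduct.tmul_mul_tmul, mul_one, idt_tmul, smul_mul_assoc,
        map_smul, map_smul, Finsupp.smul_apply, smul_eq_mul, smul_eq_mul]
      ring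
    | add v w hv hw =>
      rw [map_add, Finsupp.add_apply, add_mul, map_add, add_mul, map_add, map_add,
        Finsupp.add_apply, hv, hw]
  -- each component of E (evT u) vanishes
  have hcomp : ∀ k, E (evT X u) k = 0 := by
    intro k
    obtain ⟨P₀, hP₀⟩ := hrepr u k
    obtain ⟨Q₀, hQ₀⟩ := ev_star_aux X hXsa P₀
    have hzero : ∀ R : FA n, trVec Ω (E (evT X u) k * ev X R) = 0 := by
      intro R
      rw [hpair2, hσ R, map_zero, Finsupp.coe_zero, Pi.zero_apply]
    have h1 : trVec Ω (star (star (ev X P₀)) * star (ev X P₀)) = 0 := by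
      rw [star_star, ← hQ₀]
      have := hzero Q₀
      rwa [← hP₀] at this
    have h2 : star (ev X P₀) = 0 :=
      hfaith _ (star_mem (ev_mem_aux M X hXM P₀)) h1
    rw [← hP₀, ← star_star (ev X P₀), h2, star_zero]
  have hEz : E (evT X u) = 0 := Finsupp.ext hcomp
  exact E.injective (by rw [hEz, map_zero])

set_option maxHeartbeats 1000000 in
theorem fdq_descends_to_quotient
    {n : ℕ} (M : VonNeumannAlgebra H) (Ω : H)
    -- τ := trVec Ω is a state (‖Ω‖ = 1), Ω is cyclic (H is the standard form L²(M,τ)),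
    -- τ is tracial and faithful on M:
    (hΩ : ‖Ω‖ = 1)
    (hcyc : Dense {x : H | ∃ a : H →L[ℂ] H, a ∈ M ∧ a Ω = x})
    (htr : ∀ a b : H →L[ℂ] H, a ∈ M → b ∈ M → trVec Ω (a * b) = trVec Ω (b * a))
    (hfaith : ∀ a : H →L[ℂ] H, a ∈ M → trVec Ω (star a * a) = 0 → a = 0)
    -- self-adjoint generators X₁,…,Xₙ in M:
    (X : Fin n → (H →L[ℂ] H)) (hXM : ∀ i, X i ∈ M) (hXsa : ∀ i, IsSelfAdjoint (X i))
    -- the free difference quotients: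
    (D : Fin n → (FA n →ₗ[ℂ] FA n ⊗[ℂ] FA n)) (hD : ∀ j, IsFDQ j (D j))
    -- ξ₁,…,ξₙ ∈ L²(M,τ) satisfy the conjugate relations
    -- (τ⊗τ)((∂_j P)(X)) = τ(ξ_j · P(X)) for all P:
    (ξ : Fin n → H)
    (hconj : ∀ j, ∀ P : FA n, ttB Ω (evT X (D j P)) = ⟪(star (ev X P)) Ω, ξ j⟫_ℂ)
    (j : Fin n) :
    (∀ P : FA n, ev X P = 0 → evT X (D j P) = 0) ∧
    (∃ Dbar : (FA n ⧸ LinearMap.ker (ev X).toLinearMap) →ₗ[ℂ]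
        ((FA n ⊗[ℂ] FA n) ⧸ LinearMap.ker (evT X).toLinearMap),
      ∀ P : FA n,
        Dbar (Submodule.Quotient.mk P) = Submodule.Quotient.mk (D j P)) := by
  classical
  have evT_tmul : ∀ p q : FA n, evT X (p ⊗ₜ[ℂ] q) = ev X p ⊗ₜ[ℂ] ev X q := fun p q =>
    Algebra.TensorProduct.map_tmul (ev X) (ev X) p q
  have ttB_tmul : ∀ a b : H →L[ℂ] H, ttB Ω (a ⊗ₜ[ℂ] b) = trVec Ω a * trVec Ω b := by
    intro a b; simp [ttB]
  have idt_tmul : ∀ a b : H →L[ℂ] H, idt Ω (a ⊗ₜ[ℂ] b) = trVec Ω b • a := by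
    intro a b; simp [idt]
  -- the pairing identity (valid for all u):
  have pairA : ∀ (u : FA n ⊗[ℂ] FA n) (Q R : FA n),
      trVec Ω (ev X Q * idt Ω (evT X u * ((1 : (H →L[ℂ] H)) ⊗ₜ[ℂ] ev X R)))
        = ttB Ω (evT X ((Q ⊗ₜ[ℂ] (1 : FA n)) * u * ((1 : FA n) ⊗ₜ[ℂ] R))) := by
    intro u Q R
    induction u using TensorProduct.induction_on with
    | zero => simp
    | tmul p q =>
      rw [evT_tmul, Algebra.TensorProduct.tmul_mul_tmul, mul_one, idt_tmul,
        show (Q ⊗ₜ[ℂ] (1 : FA n)) * (p ⊗ₜ[ℂ] q) * ((1 : FA n) ⊗ₜ[ℂ] R)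
          = (Q * p) ⊗ₜ[ℂ] (q * R) by
            rw [Algebra.TensorProduct.tmul_mul_tmul, Algebra.TensorProduct.tmul_mul_tmul,
              one_mul, mul_one],
        evT_tmul, ttB_tmul, mul_smul_comm, map_smul, map_mul (ev X) Q p, map_mul (ev X) q R,
        smul_eq_mul]
      ring
    | add u v hu hv =>
      rw [map_add, add_mul, map_add, mul_add, map_add, hu, hv, mul_add (Q ⊗ₜ[ℂ] (1 : FA n)),
        add_mul, map_add, map_add]
  -- the slices of evaluated tensors lie in the image of ev:
  have sliceRange : ∀ (u : FA n ⊗[ℂ] FA n) (R : FA n),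
      ∃ P₀ : FA n, ev X P₀ = idt Ω (evT X u * ((1 : (H →L[ℂ] H)) ⊗ₜ[ℂ] ev X R)) := by
    intro u R
    induction u using TensorProduct.induction_on with
    | zero => exact ⟨0, by simp⟩
    | tmul p q =>
      refine ⟨trVec Ω (ev X q * ev X R) • p, ?_⟩
      rw [evT_tmul, Algebra.TensorProduct.tmul_mul_tmul, mul_one, idt_tmul, map_smul]
    | add u v hu hv =>
      obtain ⟨Pu, hPu⟩ := hu; obtain ⟨Pv, hPv⟩ := hv
      exact ⟨Pu + Pv, by rw [map_add, map_add, add_mul, map_add, hPu, hPv]⟩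
  -- main statement
  have key : ∀ P : FA n, ev X P = 0 → evT X (D j P) = 0 := by
    intro P hP
    obtain ⟨hLeib, -⟩ := hD j
    -- Step 0: the double sliced traces vanish
    have h0 : ∀ Q R : FA n,
        ttB Ω (evT X ((Q ⊗ₜ[ℂ] (1 : FA n)) * D j P * ((1 : FA n) ⊗ₜ[ℂ] R))) = 0 := by
      intro Q R
      have e1 : D j (Q * (P * R)) = D j Q * ((1 : FA n) ⊗ₜ[ℂ] (P * R)) +
          (Q ⊗ₜ[ℂ] (1 : FA n)) * (D j P * ((1 : FA n) ⊗ₜ[ℂ] R) +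
            (P ⊗ₜ[ℂ] (1 : FA n)) * D j R) := by
        rw [hLeib, hLeib]
      have t1 : evT X ((1 : FA n) ⊗ₜ[ℂ] (P * R)) = 0 := by
        rw [evT_tmul, map_mul, hP, zero_mul, TensorProduct.tmul_zero]
      have t2 : evT X (P ⊗ₜ[ℂ] (1 : FA n)) = 0 := by
        rw [evT_tmul, hP, TensorProduct.zero_tmul]
      have e2 : evT X (D j (Q * (P * R)))
          = evT X ((Q ⊗ₜ[ℂ] (1 : FA n)) * D j P * ((1 : FA n) ⊗ₜ[ℂ] R)) := by
        rw [e1]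
        simp only [map_add, map_mul, t1, t2, mul_zero, zero_mul, add_zero, zero_add, mul_assoc]
      have e3 : ev X (Q * (P * R)) = 0 := by rw [map_mul, map_mul, hP, zero_mul, mul_zero]
      calc ttB Ω (evT X ((Q ⊗ₜ[ℂ] (1 : FA n)) * D j P * ((1 : FA n) ⊗ₜ[ℂ] R)))
          = ttB Ω (evT X (D j (Q * (P * R)))) := by rw [e2]
        _ = ⟪(star (ev X (Q * (P * R)))) Ω, ξ j⟫_ℂ := hconj j _
        _ = 0 := by rw [e3, star_zero]; simp
    -- Step A: the right slices of s vanish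
    have hσ : ∀ R : FA n, idt Ω (evT X (D j P) * ((1 : (H →L[ℂ] H)) ⊗ₜ[ℂ] ev X R)) = 0 := by
      intro R
      obtain ⟨P₀, hP₀⟩ := sliceRange (D j P) R
      obtain ⟨Q₀, hQ₀⟩ := ev_star_aux X hXsa P₀
      have hmem : idt Ω (evT X (D j P) * ((1 : (H →L[ℂ] H)) ⊗ₜ[ℂ] ev X R)) ∈ M :=
        hP₀ ▸ ev_mem_aux M X hXM P₀
      refine hfaith _ hmem ?_
      rw [← hP₀, ← hQ₀]
      have h := pairA (D j P) Q₀ R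
      rw [← hP₀] at h
      rw [h]; exact h0 Q₀ R
    exact stepB_aux M Ω hfaith X hXM hXsa (D j P) hσ
  refine ⟨key, ?_⟩
  have hle : LinearMap.ker (ev X).toLinearMap ≤
      Submodule.comap (D j) (LinearMap.ker (evT X).toLinearMap) := by
    intro P hP
    rw [LinearMap.mem_ker, AlgHom.toLinearMap_apply] at hP
    rw [Submodule.mem_comap, LinearMap.mem_ker, AlgHom.toLinearMap_apply]
    exact key P hP
  refine ⟨Submodule.mapQ _ _ (D j) hle, fun P => ?_⟩
  rfl

end
end

section
/- Let (M,τ) be a tracial W*-probability space with faithful trace τ, and X₁,…,Xₙ ∈ M self-adjoint. If there exist ξ₁,…,ξₙ ∈ L²(M,τ) satisfying the conjugate relations (τ⊗τ)((∂_j P)(X)) = τ(ξ_j P(X)) for all polynomials P and all j = 1,…,n, then X₁,…,Xₙ satisfy no nontrivial algebraic relation: P(X₁,…,Xₙ) = 0 for P ∈ ℂ⟨Z₁,…,Zₙ⟩ implies P = 0. -/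
/- STATEMENT 5: If ξ₁,…,ξₙ ∈ L²(M,τ) satisfy the conjugate relations for the self-adjoint
tuple (X₁,…,Xₙ) in a tracial W*-probability space (M,τ) with faithful trace, then
X₁,…,Xₙ satisfy no nontrivial algebraic relation: P(X₁,…,Xₙ) = 0 implies P = 0. -/

open scoped TensorProduct InnerProductSpace
noncomputable section

variable {H : Type} [NormedAddCommGroup H] [InnerProductSpace ℂ H] [CompleteSpace H]

section Aux
set_option linter.unusedSectionVars false
variable {H : Type} [NormedAddCommGroup H] [InnerProductSpace ℂ H] [CompleteSpace H]

variable {n : ℕ}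

/-- The map `a ⊗ b ↦ τ(ev b) • a`, i.e. `(id ⊗ τ∘ev)` back into polynomials. -/
def Tmap (Ω : H) (X : Fin n → (H →L[ℂ] H)) : (FA n ⊗[ℂ] FA n) →ₗ[ℂ] FA n :=
  TensorProduct.lift (((LinearMap.lsmul ℂ (FA n)) ∘ₗ ((trVec Ω) ∘ₗ (ev X).toLinearMap)).flip)

@[simp] lemma Tmap_tmul (Ω : H) (X : Fin n → (H →L[ℂ] H)) (a b : FA n) :
    Tmap Ω X (a ⊗ₜ[ℂ] b) = (trVec Ω (ev X b)) • a := rfl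

@[simp] lemma ttB_tmul (Ω : H) (a b : H →L[ℂ] H) :
    ttB Ω (a ⊗ₜ[ℂ] b) = trVec Ω a * trVec Ω b := rfl

@[simp] lemma ev_ι (X : Fin n → (H →L[ℂ] H)) (i : Fin n) :
    ev X (FreeAlgebra.ι ℂ i) = X i := FreeAlgebra.lift_ι_apply ..

lemma ev_mem (M : VonNeumannAlgebra H) (X : Fin n → (H →L[ℂ] H)) (hXM : ∀ i, X i ∈ M)
    (P : FA n) : ev X P ∈ M := by
  induction P using FreeAlgebra.induction with
  | grade0 r => simp only [AlgHom.commutes]; exact M.toSubalgebra.algebraMap_mem r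
  | grade1 i => simpa using hXM i
  | mul a b ha hb => rw [map_mul]; exact mul_mem ha hb
  | add a b ha hb => rw [map_add]; exact add_mem ha hb

lemma star_ev_range (X : Fin n → (H →L[ℂ] H)) (hXsa : ∀ i, IsSelfAdjoint (X i))
    (P : FA n) : ∃ Q : FA n, ev X Q = star (ev X P) := by
  induction P using FreeAlgebra.induction with
  | grade0 r =>
      refine ⟨algebraMap ℂ (FA n) (starRingEnd ℂ r), ?_⟩
      simp [AlgHom.commutes, Algebra.algebraMap_eq_smul_one, star_smul]
  | grade1 i => exact ⟨FreeAlgebra.ι ℂ i, by simp [(hXsa i).star_eq]⟩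
  | mul a b ha hb =>
      obtain ⟨Qa, hQa⟩ := ha; obtain ⟨Qb, hQb⟩ := hb
      exact ⟨Qb * Qa, by simp [map_mul, hQa, hQb, star_mul]⟩
  | add a b ha hb =>
      obtain ⟨Qa, hQa⟩ := ha; obtain ⟨Qb, hQb⟩ := hb
      exact ⟨Qa + Qb, by simp [map_add, hQa, hQb, star_add]⟩

lemma ttB_mul_tmul_zero (Ω : H) (X : Fin n → (H →L[ℂ] H)) (x : FA n ⊗[ℂ] FA n)
    {P : FA n} (hP : ev X P = 0) :
    ttB Ω (evT X (x * ((1 : FA n) ⊗ₜ[ℂ] P))) = 0 := by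
  have : evT X (x * ((1 : FA n) ⊗ₜ[ℂ] P)) = 0 := by
    rw [map_mul]
    have : evT X ((1 : FA n) ⊗ₜ[ℂ] P) = 0 := by
      simp [evT, Algebra.TensorProduct.map_tmul, hP]
    rw [this, mul_zero]
  rw [this, map_zero]

lemma ttB_tmul_one_mul (Ω : H) (X : Fin n → (H →L[ℂ] H)) (Q : FA n) (y : FA n ⊗[ℂ] FA n) :
    ttB Ω (evT X ((Q ⊗ₜ[ℂ] (1 : FA n)) * y)) = trVec Ω (ev X Q * ev X (Tmap Ω X y)) := by
  induction y using TensorProduct.induction_on with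
  | zero => simp
  | tmul a b =>
      rw [Algebra.TensorProduct.tmul_mul_tmul, one_mul]
      simp only [evT, Algebra.TensorProduct.map_tmul, ttB_tmul, Tmap_tmul, map_mul, map_smul,
        mul_smul_comm]
      rw [smul_eq_mul]; ring
  | add x y hx hy =>
      rw [mul_add, map_add, map_add, hx, hy, map_add, map_add, mul_add, map_add]

/-- **Lemma A**: the reduction `P ↦ (id ⊗ τ)(∂_j P)` preserves the kernel of evaluation. -/
lemma lemA (M : VonNeumannAlgebra H) (Ω : H)
    (hfaith : ∀ a : H →L[ℂ] H, a ∈ M → trVec Ω (star a * a) = 0 → a = 0)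
    (X : Fin n → (H →L[ℂ] H)) (hXM : ∀ i, X i ∈ M) (hXsa : ∀ i, IsSelfAdjoint (X i))
    (Dj : FA n →ₗ[ℂ] FA n ⊗[ℂ] FA n)
    (hLeib : ∀ P Q : FA n, Dj (P * Q) = Dj P * (1 ⊗ₜ[ℂ] Q) + (P ⊗ₜ[ℂ] 1) * Dj Q)
    (ξj : H)
    (hconj : ∀ P : FA n, ttB Ω (evT X (Dj P)) = ⟪(star (ev X P)) Ω, ξj⟫_ℂ)
    {P : FA n} (hP : ev X P = 0) :
    ev X (Tmap Ω X (Dj P)) = 0 := by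
  set c := ev X (Tmap Ω X (Dj P)) with hc
  have key : ∀ Q : FA n, trVec Ω (ev X Q * c) = 0 := by
    intro Q
    have h0 : ttB Ω (evT X (Dj (Q * P))) = 0 := by
      rw [hconj (Q * P), map_mul, hP, mul_zero, star_zero]
      simp
    rw [hLeib Q P, map_add, map_add, ttB_mul_tmul_zero Ω X _ hP,
      ttB_tmul_one_mul Ω X Q (Dj P), zero_add] at h0
    exact h0
  obtain ⟨Q, hQ⟩ := star_ev_range X hXsa (Tmap Ω X (Dj P))
  have := key Q
  rw [hQ, ← hc] at this
  exact hfaith c (ev_mem M X hXM _) this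


/-- The monoid algebra model of `FA n`. -/
abbrev MA (n : ℕ) := MonoidAlgebra ℂ (FreeMonoid (Fin n))

def eFA {n : ℕ} : FA n ≃ₐ[ℂ] MA n := FreeAlgebra.equivMonoidAlgebraFreeMonoid

def mono {n : ℕ} (l : List (Fin n)) : FA n := (l.map (FreeAlgebra.ι ℂ)).prod

lemma mono_nil : mono ([] : List (Fin n)) = 1 := rfl

lemma mono_concat (l : List (Fin n)) (i : Fin n) :
    mono (l ++ [i]) = mono l * FreeAlgebra.ι ℂ i := by
  simp [mono]

lemma eFA_mono (l : List (Fin n)) :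
    eFA (mono l) = MonoidAlgebra.single (FreeMonoid.ofList l) 1 := by
  induction l with
  | nil =>
      rw [mono_nil, map_one]
      rfl
  | cons i t ih =>
      have h : mono (i :: t) = FreeAlgebra.ι ℂ i * mono t := rfl
      have hι : eFA (FreeAlgebra.ι ℂ i) = MonoidAlgebra.single (FreeMonoid.of i) 1 := by
        simp [eFA, FreeAlgebra.equivMonoidAlgebraFreeMonoid]
      rw [h, map_mul, ih, hι, MonoidAlgebra.single_mul_single, one_mul]
      rfl

lemma D_one (Dj : FA n →ₗ[ℂ] FA n ⊗[ℂ] FA n)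
    (hLeib : ∀ P Q : FA n, Dj (P * Q) = Dj P * (1 ⊗ₜ[ℂ] Q) + (P ⊗ₜ[ℂ] 1) * Dj Q) :
    Dj 1 = 0 := by
  have h := hLeib 1 1
  rw [mul_one] at h
  have h1 : (1 : FA n) ⊗ₜ[ℂ] (1 : FA n) = 1 := rfl
  rw [h1, mul_one, one_mul] at h
  exact right_eq_add.mp h

/-- span of elementary tensors of monomials of small total length -/
def Gsub {n : ℕ} (k : ℕ) : Submodule ℂ (FA n ⊗[ℂ] FA n) :=
  Submodule.span ℂ
    {x | ∃ a b : List (Fin n), a.length + b.length + 1 ≤ k ∧ x = mono a ⊗ₜ[ℂ] mono b}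

lemma DG (j : Fin n) (Dj : FA n →ₗ[ℂ] FA n ⊗[ℂ] FA n)
    (hLeib : ∀ P Q : FA n, Dj (P * Q) = Dj P * (1 ⊗ₜ[ℂ] Q) + (P ⊗ₜ[ℂ] 1) * Dj Q)
    (hgen : ∀ i : Fin n, Dj (FreeAlgebra.ι ℂ i)
      = if i = j then (1 : FA n) ⊗ₜ[ℂ] (1 : FA n) else 0) :
    ∀ l : List (Fin n), Dj (mono l) ∈ Gsub l.length := by
  intro l
  induction l using List.reverseRecOn with
  | nil => rw [mono_nil, D_one Dj hLeib]; exact zero_mem _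
  | append_singleton t i ih =>
      rw [mono_concat, hLeib]
      refine add_mem ?_ ?_
      · have hle : Gsub t.length ≤
            Submodule.comap (LinearMap.mulRight ℂ ((1 : FA n) ⊗ₜ[ℂ] FreeAlgebra.ι ℂ i))
              (Gsub (n := n) ((t ++ [i]).length)) := by
          rw [Gsub]
          apply Submodule.span_le.2
          rintro x ⟨a, b, hab, rfl⟩
          simp only [SetLike.mem_coe, Submodule.mem_comap, LinearMap.mulRight_apply]
          rw [Algebra.TensorProduct.tmul_mul_tmul, mul_one, ← mono_concat]
          exact Submodule.subset_span ⟨a, b ++ [i], by simp only [List.length_append, List.length_singleton]; omega, rfl⟩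
        exact hle ih
      · rw [hgen i]
        by_cases h : i = j
        · rw [if_pos h]
          have h1 : (1 : FA n) ⊗ₜ[ℂ] (1 : FA n) = 1 := rfl
          rw [h1, mul_one]
          exact Submodule.subset_span ⟨t, [], by simp, by rw [mono_nil]⟩
        · rw [if_neg h, mul_zero]; exact zero_mem _

def stripW {n : ℕ} (j : Fin n) (w : FreeMonoid (Fin n)) : MA n :=
  if w.toList.getLast? = some j then
    MonoidAlgebra.single (FreeMonoid.ofList w.toList.dropLast) 1 else 0

def stripA {n : ℕ} (j : Fin n) : MA n →ₗ[ℂ] MA n :=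
  (Finsupp.lsum ℂ fun w => LinearMap.toSpanSingleton ℂ (MA n) (stripW j w)) ∘ₗ
    (MonoidAlgebra.coeffLinearEquiv ℂ).toLinearMap

lemma stripA_single (j : Fin n) (w : FreeMonoid (Fin n)) (c : ℂ) :
    stripA j (MonoidAlgebra.single w c) = c • stripW j w :=
  Finsupp.lsum_single ℂ _ _ _

lemma stripA_single' (j : Fin n) (w : FreeMonoid (Fin n)) (c : ℂ) :
    stripA j (MonoidAlgebra.single w c) = c • stripW j w :=
  Finsupp.lsum_single ℂ _ _ _

lemma stripA_apply (j : Fin n) (p : MA n) (l : List (Fin n)) :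
    (stripA j p).coeff (FreeMonoid.ofList l) = p.coeff (FreeMonoid.ofList (l ++ [j])) := by
  induction p using MonoidAlgebra.induction_linear with
  | zero => simp
  | add f g hf hg => rw [map_add, MonoidAlgebra.coeff_add, MonoidAlgebra.coeff_add,
      Finsupp.add_apply, Finsupp.add_apply, hf, hg]
  | single w c =>
      rw [stripA_single', MonoidAlgebra.coeff_smul, Finsupp.smul_apply, stripW]
      by_cases hlast : w.toList.getLast? = some j
      · rw [if_pos hlast]; simp only [MonoidAlgebra.coeff_single]
        have hne : w.toList ≠ [] := by
          intro h; rw [h] at hlast; simp at hlast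
        have hgl : w.toList.getLast hne = j := by
          have h2 := List.getLast?_eq_getLast hne
          rw [h2] at hlast; exact (Option.some_inj.mp hlast)
        have hw : w.toList.dropLast ++ [j] = w.toList := by
          conv_rhs => rw [← List.dropLast_append_getLast hne]
          rw [hgl]
        by_cases heq : w = FreeMonoid.ofList (l ++ [j])
        · subst heq
          have h1 : (FreeMonoid.ofList (l ++ [j])).toList = l ++ [j] := rfl
          have h2 : (FreeMonoid.ofList (l ++ [j])).toList.dropLast = l := by
            rw [h1]; exact List.dropLast_concat ..
          rw [h2, Finsupp.single_eq_same, Finsupp.single_eq_same, smul_eq_mul, mul_one]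
        · have h1 : FreeMonoid.ofList w.toList.dropLast ≠ FreeMonoid.ofList l := by
            intro h
            apply heq
            have h3 : w.toList.dropLast = l := FreeMonoid.ofList.injective h
            have h4 : w.toList = l ++ [j] := by rw [← h3, hw]
            rw [← h4]
            exact (FreeMonoid.ofList_toList w).symm
          rw [Finsupp.single_eq_of_ne' h1, Finsupp.single_eq_of_ne' heq, smul_zero]
      · rw [if_neg hlast]; simp only [MonoidAlgebra.coeff_single]
        have hne : w ≠ FreeMonoid.ofList (l ++ [j]) := by
          intro h
          apply hlast
          rw [h]
          have h1 : (FreeMonoid.ofList (l ++ [j])).toList = l ++ [j] := rfl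
          rw [h1, List.getLast?_concat]
        rw [Finsupp.single_eq_of_ne' hne]
        simp

def Flt {n : ℕ} (k : ℕ) : Submodule ℂ (MA n) :=
  MonoidAlgebra.supported ℂ ℂ {w : FreeMonoid (Fin n) | w.length < k}

lemma Flt_mono {k k' : ℕ} (h : k ≤ k') : Flt (n := n) k ≤ Flt k' :=
  MonoidAlgebra.supported_mono (fun w hw => lt_of_lt_of_le hw h)

lemma single_mem_Flt {w : FreeMonoid (Fin n)} {c : ℂ} {k : ℕ} (h : w.length < k) :
    MonoidAlgebra.single w c ∈ Flt (n := n) k := by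
  rw [Flt, MonoidAlgebra.mem_supported]
  intro x hx
  have := Finsupp.support_single_subset hx
  simp only [Finset.mem_singleton] at this
  subst this
  exact h

lemma stripA_Flt (j : Fin n) {k : ℕ} {p : MA n} (hp : p ∈ Flt (n := n) k) :
    stripA j p ∈ Flt (k - 1) := by
  rw [Flt, MonoidAlgebra.mem_supported]
  intro v hv
  rw [Finset.mem_coe, Finsupp.mem_support_iff] at hv
  have hv2 : (stripA j p).coeff (FreeMonoid.ofList v.toList) ≠ 0 := by
    rwa [FreeMonoid.ofList_toList]
  rw [stripA_apply] at hv2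
  have hmem : FreeMonoid.ofList (v.toList ++ [j]) ∈ p.coeff.support := Finsupp.mem_support_iff.2 hv2
  have hlen := MonoidAlgebra.mem_supported.1 hp hmem
  simp only [Set.mem_setOf_eq] at hlen ⊢
  have h1 : (FreeMonoid.ofList (v.toList ++ [j])).length = v.length + 1 := by
    show (v.toList ++ [j]).length = v.toList.length + 1
    simp
  rw [h1] at hlen
  omega


lemma eFA_mono' (l : List (Fin n)) :
    eFA (mono l) = MonoidAlgebra.single (FreeMonoid.ofList l) (1 : ℂ) := by
  rw [eFA_mono]

lemma trVec_one (Ω : H) (hΩ : ‖Ω‖ = 1) : trVec Ω (1 : H →L[ℂ] H) = 1 := by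
  show ⟪Ω, (1 : H →L[ℂ] H) Ω⟫_ℂ = 1
  rw [ContinuousLinearMap.one_apply, inner_self_eq_norm_sq_to_K, hΩ]
  norm_num

lemma GsubFlt (Ω : H) (X : Fin n → (H →L[ℂ] H)) (i : Fin n) {k : ℕ}
    {x : FA n ⊗[ℂ] FA n} (hx : x ∈ Gsub (n := n) k) :
    eFA (Tmap Ω X (x * ((1 : FA n) ⊗ₜ[ℂ] FreeAlgebra.ι ℂ i))) ∈ Flt (n := n) k := by
  have hle : Gsub (n := n) k ≤ Submodule.comap
      (eFA.toLinearMap ∘ₗ Tmap Ω X ∘ₗ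
        LinearMap.mulRight ℂ ((1 : FA n) ⊗ₜ[ℂ] FreeAlgebra.ι ℂ i))
      (Flt (n := n) k) := by
    rw [Gsub]
    apply Submodule.span_le.2
    rintro x ⟨a, b, hab, rfl⟩
    simp only [SetLike.mem_coe, Submodule.mem_comap, LinearMap.comp_apply,
      LinearMap.mulRight_apply, AlgEquiv.toLinearMap_apply]
    rw [Algebra.TensorProduct.tmul_mul_tmul, mul_one, ← mono_concat, Tmap_tmul,
      map_smul, eFA_mono']
    refine Submodule.smul_mem _ _ (single_mem_Flt ?_)
    show (FreeMonoid.ofList a).length < k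
    have h2 : (FreeMonoid.ofList a).length = a.length := rfl
    omega
  exact hle hx

lemma keyMono (Ω : H) (hΩ : ‖Ω‖ = 1) (X : Fin n → (H →L[ℂ] H)) (j : Fin n)
    (Dj : FA n →ₗ[ℂ] FA n ⊗[ℂ] FA n)
    (hLeib : ∀ P Q : FA n, Dj (P * Q) = Dj P * (1 ⊗ₜ[ℂ] Q) + (P ⊗ₜ[ℂ] 1) * Dj Q)
    (hgen : ∀ i : Fin n, Dj (FreeAlgebra.ι ℂ i)
      = if i = j then (1 : FA n) ⊗ₜ[ℂ] (1 : FA n) else 0) :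
    ∀ l : List (Fin n),
      eFA (Tmap Ω X (Dj (mono l))) - stripW j (FreeMonoid.ofList l)
        ∈ Flt (n := n) (l.length - 1) := by
  intro l
  induction l using List.reverseRecOn with
  | nil =>
      rw [mono_nil, D_one Dj hLeib, map_zero, map_zero]
      have h0 : stripW j (FreeMonoid.ofList ([] : List (Fin n))) = 0 := by
        rw [stripW, if_neg (by simp)]
      rw [h0, sub_zero]
      exact zero_mem _
  | append_singleton t i ih =>
      rw [mono_concat, hLeib, map_add, map_add, hgen i]
      have hstrip : eFA (Tmap Ω X ((mono t ⊗ₜ[ℂ] (1 : FA n)) *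
          (if i = j then (1 : FA n) ⊗ₜ[ℂ] (1 : FA n) else 0)))
          = stripW j (FreeMonoid.ofList (t ++ [i])) := by
        have htl : (FreeMonoid.ofList (t ++ [i])).toList = t ++ [i] := rfl
        by_cases h : i = j
        · rw [if_pos h]
          rw [Algebra.TensorProduct.tmul_mul_tmul, mul_one, one_mul, Tmap_tmul,
            map_one, trVec_one Ω hΩ, one_smul, eFA_mono']
          have hcond : (FreeMonoid.ofList (t ++ [i])).toList.getLast? = some j := by
            rw [htl, List.getLast?_concat, h]
          rw [stripW, if_pos hcond, htl, List.dropLast_concat]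
        · rw [if_neg h, mul_zero, map_zero, map_zero]
          have hcond : ¬ ((FreeMonoid.ofList (t ++ [i])).toList.getLast? = some j) := by
            rw [htl, List.getLast?_concat]
            intro hc
            exact h (Option.some_inj.mp hc)
          rw [stripW, if_neg hcond]
      rw [hstrip, add_sub_cancel_right]
      have hlen : (t ++ [i]).length - 1 = t.length := by simp
      rw [hlen]
      exact GsubFlt Ω X i (DG j Dj hLeib hgen t)

lemma keyF (Ω : H) (hΩ : ‖Ω‖ = 1) (X : Fin n → (H →L[ℂ] H)) (j : Fin n)
    (Dj : FA n →ₗ[ℂ] FA n ⊗[ℂ] FA n)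
    (hLeib : ∀ P Q : FA n, Dj (P * Q) = Dj P * (1 ⊗ₜ[ℂ] Q) + (P ⊗ₜ[ℂ] 1) * Dj Q)
    (hgen : ∀ i : Fin n, Dj (FreeAlgebra.ι ℂ i)
      = if i = j then (1 : FA n) ⊗ₜ[ℂ] (1 : FA n) else 0)
    {k : ℕ} {p : MA n} (hp : p ∈ Flt (n := n) k) :
    eFA (Tmap Ω X (Dj (eFA.symm p))) - stripA j p ∈ Flt (n := n) (k - 2) := by
  set L : MA n →ₗ[ℂ] MA n :=
    (eFA.toLinearMap ∘ₗ Tmap Ω X ∘ₗ Dj ∘ₗ (eFA (n := n)).symm.toLinearMap) - stripA j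
    with hL
  have hLapp : ∀ q : MA n, L q = eFA (Tmap Ω X (Dj (eFA.symm q))) - stripA j q := by
    intro q
    simp [hL, LinearMap.sub_apply]
  have hle : Flt (n := n) k ≤ Submodule.comap L (Flt (n := n) (k - 2)) := by
    rw [Flt, MonoidAlgebra.supported_eq_span_single]
    apply Submodule.span_le.2
    rintro x ⟨w, hw, rfl⟩
    simp only [Set.mem_setOf_eq] at hw
    simp only [SetLike.mem_coe, Submodule.mem_comap]
    show eFA (Tmap Ω X (Dj (eFA.symm (MonoidAlgebra.single w (1 : ℂ))))) -
      stripA j (MonoidAlgebra.single w (1 : ℂ)) ∈ Flt (n := n) (k - 2)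
    have hsym : eFA.symm (MonoidAlgebra.single w (1 : ℂ)) = mono (n := n) w.toList := by
      apply eFA.injective
      rw [AlgEquiv.apply_symm_apply, eFA_mono', FreeMonoid.ofList_toList]
    have hstr : stripA j (MonoidAlgebra.single w (1 : ℂ)) = stripW j w := by
      rw [stripA_single', one_smul]
    rw [hsym, hstr]
    have := keyMono Ω hΩ X j Dj hLeib hgen w.toList
    rw [FreeMonoid.ofList_toList] at this
    exact Flt_mono (by
      have : w.toList.length = w.length := rfl
      omega) this
  exact hle hp
end Aux

theorem no_algebraic_relations_of_conjugate_relations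
    {n : ℕ} (M : VonNeumannAlgebra H) (Ω : H)
    -- τ := trVec Ω is a state (‖Ω‖ = 1), Ω is cyclic (H is the standard form L²(M,τ)),
    -- τ is tracial and faithful on M:
    (hΩ : ‖Ω‖ = 1)
    (hcyc : Dense {x : H | ∃ a : H →L[ℂ] H, a ∈ M ∧ a Ω = x})
    (htr : ∀ a b : H →L[ℂ] H, a ∈ M → b ∈ M → trVec Ω (a * b) = trVec Ω (b * a))
    (hfaith : ∀ a : H →L[ℂ] H, a ∈ M → trVec Ω (star a * a) = 0 → a = 0)
    -- self-adjoint generators X₁,…,Xₙ in M: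
    (X : Fin n → (H →L[ℂ] H)) (hXM : ∀ i, X i ∈ M) (hXsa : ∀ i, IsSelfAdjoint (X i))
    -- the free difference quotients:
    (D : Fin n → (FA n →ₗ[ℂ] FA n ⊗[ℂ] FA n)) (hD : ∀ j, IsFDQ j (D j))
    -- ξ₁,…,ξₙ ∈ L²(M,τ) satisfy the conjugate relations
    -- (τ⊗τ)((∂_j P)(X)) = τ(ξ_j · P(X)) for all P:
    (ξ : Fin n → H)
    (hconj : ∀ j, ∀ P : FA n, ttB Ω (evT X (D j P)) = ⟪(star (ev X P)) Ω, ξ j⟫_ℂ) :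
    ∀ P : FA n, ev X P = 0 → P = 0 := by
  intro P hP
  have hΩne : Ω ≠ 0 := by intro h; rw [h, norm_zero] at hΩ; norm_num at hΩ
  have hone : (1 : H →L[ℂ] H) ≠ 0 := by
    intro h
    have h2 := congrArg (fun f : H →L[ℂ] H => f Ω) h
    simp only [ContinuousLinearMap.one_apply, ContinuousLinearMap.zero_apply] at h2
    exact hΩne h2
  have main : ∀ d : ℕ, ∀ P : FA n, eFA P ∈ Flt (n := n) (d + 1) → ev X P = 0 → P = 0 := by
    intro d
    induction d with
    | zero =>
        intro P hF hP0
        have hsub : (eFA P).coeff.support ⊆ {1} := by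
          intro w hw
          have hlen := MonoidAlgebra.mem_supported.1 hF hw
          simp only [Set.mem_setOf_eq] at hlen
          simp only [Finset.mem_singleton]
          have hlen2 : w.toList.length = 0 := by
            have hh : w.length = w.toList.length := rfl
            omega
          have hnil : w.toList = [] := List.length_eq_zero_iff.1 hlen2
          calc w = FreeMonoid.ofList w.toList := (FreeMonoid.ofList_toList w).symm
          _ = 1 := by rw [hnil]; rfl
        set c := (eFA P).coeff 1 with hc
        have hsingle : eFA P = MonoidAlgebra.single 1 c :=
          MonoidAlgebra.coeff_injective (Finsupp.support_subset_singleton.1 hsub)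
        have hP1 : P = c • 1 := by
          apply eFA.injective
          rw [map_smul, map_one, hsingle, MonoidAlgebra.one_def]
          rw [MonoidAlgebra.smul_single, smul_eq_mul, mul_one]
        rw [hP1, map_smul, map_one] at hP0
        rcases smul_eq_zero.1 hP0 with hc0 | h1
        · rw [hP1, hc0, zero_smul]
        · exact absurd h1 hone
    | succ d ih =>
        intro P hF hP0
        have hΔ0 : ∀ j : Fin n, Tmap Ω X (D j P) = 0 := by
          intro j
          apply ih
          · have h1 := keyF Ω hΩ X j (D j) (hD j).1 (hD j).2 (k := d + 2) (p := eFA P) hF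
            rw [AlgEquiv.symm_apply_apply] at h1
            have h2 : stripA j (eFA P) ∈ Flt (n := n) (d + 1) := stripA_Flt j hF
            have h3 : eFA (Tmap Ω X (D j P)) =
                (eFA (Tmap Ω X (D j P)) - stripA j (eFA P)) + stripA j (eFA P) := by
              abel
            rw [h3]
            exact add_mem (Flt_mono (by omega) h1) h2
          · exact lemA M Ω hfaith X hXM hXsa (D j) (hD j).1 (ξ j) (hconj j) hP0
        have hF' : eFA P ∈ Flt (n := n) (d + 1) := by
          rw [Flt, MonoidAlgebra.mem_supported]
          intro w hw
          rw [Finset.mem_coe] at hw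
          simp only [Set.mem_setOf_eq]
          by_contra hlen
          push_neg at hlen
          have hwlen : w.length < d + 2 := MonoidAlgebra.mem_supported.1 hF hw
          have hm : w.toList ≠ [] := by
            intro h
            have h0 : w.length = 0 := by show w.toList.length = 0; rw [h]; rfl
            omega
          set j := w.toList.getLast hm with hj
          have hw_eq : w.toList.dropLast ++ [j] = w.toList :=
            List.dropLast_append_getLast hm
          have h1 := keyF Ω hΩ X j (D j) (hD j).1 (hD j).2 (k := d + 2) (p := eFA P) hF
          rw [AlgEquiv.symm_apply_apply] at h1
          rw [hΔ0 j, map_zero, zero_sub] at h1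
          have h2 : stripA j (eFA P) ∈ Flt (n := n) (d + 2 - 2) := by
            have hneg := Submodule.neg_mem _ h1
            rwa [neg_neg] at hneg
          have h3 := stripA_apply j (eFA P) w.toList.dropLast
          rw [show FreeMonoid.ofList (w.toList.dropLast ++ [j]) = w by
            rw [hw_eq]; exact FreeMonoid.ofList_toList w] at h3
          have h5 : (eFA P).coeff w ≠ 0 := Finsupp.mem_support_iff.1 hw
          have h6 : FreeMonoid.ofList w.toList.dropLast ∈ (stripA j (eFA P)).coeff.support :=
            Finsupp.mem_support_iff.2 (by rw [h3]; exact h5)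
          have h7 := MonoidAlgebra.mem_supported.1 h2 h6
          simp only [Set.mem_setOf_eq] at h7
          have h8 : (FreeMonoid.ofList w.toList.dropLast).length = w.toList.length - 1 := by
            show w.toList.dropLast.length = w.toList.length - 1
            exact List.length_dropLast
          have h9 : w.toList.length = w.length := rfl
          omega
        exact ih P hF' hP0
  have hd : eFA P ∈ Flt (n := n) ((eFA P).coeff.support.sup FreeMonoid.length + 1) := by
    rw [Flt, MonoidAlgebra.mem_supported]
    intro w hw
    rw [Finset.mem_coe] at hw
    simp only [Set.mem_setOf_eq]
    exact Nat.lt_succ_of_le (Finset.le_sup hw)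
  exact main _ P hd hP
end
end
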